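/- arXiv:2412.04928 — 4 statements merged into one kernel-verified Lean document; each statement's English description precedes it below -/
import Mathlib

section
/- If f is a Hahn series solution of the inhomogeneous Mahler equation L(f) = a_{-∞}, then val f belongs to {π(val a_{-∞})} ∪ −S(L). -/
open Polynomial Finset

noncomputable def PL {K : Type*} [Field K] (ℓ n : ℕ) (a : ℕ → Polynomial K) : Finset (ℚ × ℚ) :=
  (Finset.range (n + 1)).biUnion fun i =>
    (a i).support.image fun j : ℕ => ((ℓ : ℚ) ^ i, (j : ℚ))

noncomputable def PsiSet {K : Type*} [Field K] (ℓ n : ℕ) (a : ℕ → Polynomial K) (v : ℚ) :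
    Finset ℚ :=
  (PL ℓ n a).image fun p => v * p.1 + p.2

noncomputable def psi {K : Type*} [Field K] (ℓ n : ℕ) (a : ℕ → Polynomial K) (v : ℚ) : ℚ :=
  ((PsiSet ℓ n a v).min).untopD 0

noncomputable def piF {K : Type*} [Field K] (ℓ n : ℕ) (a : ℕ → Polynomial K) (q : ℚ) : ℚ :=
  (((PL ℓ n a).image fun p => (q - p.2) / p.1).max).unbotD 0

def slopeSet {K : Type*} [Field K] (ℓ n : ℕ) (a : ℕ → Polynomial K) : Set ℚ :=
  {μ | ∃ b : ℚ,
    (∃ p ∈ PL ℓ n a, ∃ q ∈ PL ℓ n a, p ≠ q ∧ p.2 - μ * p.1 = b ∧ q.2 - μ * q.1 = b) ∧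
    ∀ p ∈ PL ℓ n a, b ≤ p.2 - μ * p.1}

noncomputable def scaleEmb (ℓ : ℕ) (hℓ : 2 ≤ ℓ) (i : ℕ) : ℚ ↪o ℚ :=
  (OrderIso.mulLeft₀ ((ℓ : ℚ) ^ i)
    (pow_pos (by exact_mod_cast Nat.lt_of_lt_of_le Nat.zero_lt_two hℓ) i)).toOrderEmbedding

noncomputable def mahlerOp {K : Type*} [Field K] (ℓ : ℕ) (hℓ : 2 ≤ ℓ) (n : ℕ)
    (a : ℕ → Polynomial K) (f : HahnSeries ℚ K) : HahnSeries ℚ K :=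
  ∑ i ∈ Finset.range (n + 1),
    (HahnSeries.ofPowerSeries ℚ K (a i : PowerSeries K)) *
      HahnSeries.embDomain (scaleEmb ℓ hℓ i) f

lemma scaleEmb_apply (ℓ : ℕ) (hℓ : 2 ≤ ℓ) (i : ℕ) (x : ℚ) :
    scaleEmb ℓ hℓ i x = (ℓ : ℚ) ^ i * x := rfl

lemma ofPS_monomial {K : Type*} [Field K] (j : ℕ) (c : K) :
    HahnSeries.ofPowerSeries ℚ K ((monomial j c : K[X]) : PowerSeries K)
      = HahnSeries.single (j : ℚ) c := by
  have h1 : ((monomial j c : K[X]) : PowerSeries K)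
      = PowerSeries.C c * PowerSeries.X ^ j := by
    rw [Polynomial.coe_monomial, PowerSeries.X_pow_eq]
    ext k
    simp [PowerSeries.coeff_monomial, PowerSeries.coeff_C_mul]
  rw [h1, map_mul, HahnSeries.ofPowerSeries_C, HahnSeries.ofPowerSeries_X_pow,
    show (HahnSeries.C c : HahnSeries ℚ K) = HahnSeries.single 0 c from rfl,
    HahnSeries.single_mul_single, zero_add, mul_one]

lemma ofPS_poly {K : Type*} [Field K] (p : K[X]) :
    HahnSeries.ofPowerSeries ℚ K (p : PowerSeries K)
      = ∑ j ∈ p.support, HahnSeries.single (j : ℚ) (p.coeff j) := by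
  conv_lhs => rw [p.as_sum_support]
  rw [← Polynomial.coeToPowerSeries.ringHom_apply, map_sum, map_sum]
  exact Finset.sum_congr rfl fun j _ => by
    rw [Polynomial.coeToPowerSeries.ringHom_apply, ofPS_monomial]

lemma mahler_coeff {K : Type*} [Field K] (ℓ : ℕ) (hℓ : 2 ≤ ℓ) (n : ℕ)
    (a : ℕ → Polynomial K) (f : HahnSeries ℚ K) (q : ℚ) :
    (mahlerOp ℓ hℓ n a f).coeff q
      = ∑ i ∈ Finset.range (n + 1), ∑ j ∈ (a i).support,
          (a i).coeff j * f.coeff ((q - (j : ℚ)) / (ℓ : ℚ) ^ i) := by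
  have hpow : ∀ i : ℕ, (0 : ℚ) < (ℓ : ℚ) ^ i := fun i =>
    pow_pos (by exact_mod_cast Nat.lt_of_lt_of_le Nat.zero_lt_two hℓ) i
  rw [mahlerOp]
  rw [show (∑ i ∈ Finset.range (n + 1),
      (HahnSeries.ofPowerSeries ℚ K (a i : PowerSeries K)) *
        HahnSeries.embDomain (scaleEmb ℓ hℓ i) f).coeff q
    = ∑ i ∈ Finset.range (n + 1),
      ((HahnSeries.ofPowerSeries ℚ K (a i : PowerSeries K)) *
        HahnSeries.embDomain (scaleEmb ℓ hℓ i) f).coeff q from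
    map_sum (HahnSeries.coeff.addMonoidHom q) _ _]
  refine Finset.sum_congr rfl fun i _ => ?_
  rw [ofPS_poly, Finset.sum_mul]
  rw [show (∑ j ∈ (a i).support, HahnSeries.single (j : ℚ) ((a i).coeff j) *
        HahnSeries.embDomain (scaleEmb ℓ hℓ i) f).coeff q
    = ∑ j ∈ (a i).support, (HahnSeries.single (j : ℚ) ((a i).coeff j) *
        HahnSeries.embDomain (scaleEmb ℓ hℓ i) f).coeff q from
    map_sum (HahnSeries.coeff.addMonoidHom q) _ _]
  refine Finset.sum_congr rfl fun j _ => ?_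
  have hq : (q - j) + (j : ℚ) = q := by ring
  have key := HahnSeries.coeff_single_mul_add (r := (a i).coeff j)
    (x := HahnSeries.embDomain (scaleEmb ℓ hℓ i) f) (a := q - (j : ℚ)) (b := (j : ℚ))
  rw [hq] at key
  rw [key]
  congr 1
  have hx : scaleEmb ℓ hℓ i ((q - (j : ℚ)) / (ℓ : ℚ) ^ i) = q - j := by
    rw [scaleEmb_apply]
    field_simp
  conv_lhs => rw [← hx]
  exact HahnSeries.embDomain_coeff

lemma mem_PL {K : Type*} [Field K] {ℓ n : ℕ} {a : ℕ → Polynomial K} {p : ℚ × ℚ} :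
    p ∈ PL ℓ n a ↔ ∃ i, i ≤ n ∧ ∃ j ∈ (a i).support, ((ℓ : ℚ) ^ i, (j : ℚ)) = p := by
  simp [PL, Finset.mem_biUnion, Finset.mem_image, Nat.lt_succ_iff]

set_option maxHeartbeats 1000000 in
theorem stmt4 {K : Type*} [Field K] (ℓ n : ℕ) (hℓ : 2 ≤ ℓ) (a : ℕ → Polynomial K)
    (h0 : a 0 ≠ 0) (hn : a n ≠ 0) (ainf f : HahnSeries ℚ K)
    (hf : mahlerOp ℓ hℓ n a f = ainf) :
    f.orderTop = WithTop.map (piF ℓ n a) ainf.orderTop ∨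
      ∃ μ ∈ slopeSet ℓ n a, f.orderTop = ((-μ : ℚ) : WithTop ℚ) := by
  have hℓ1 : (1 : ℚ) < (ℓ : ℚ) := by exact_mod_cast Nat.lt_of_lt_of_le Nat.one_lt_two hℓ
  have hpow : ∀ i : ℕ, (0 : ℚ) < (ℓ : ℚ) ^ i := fun i => pow_pos (by linarith) i
  have hpowinj : ∀ i i' : ℕ, (ℓ : ℚ) ^ i = (ℓ : ℚ) ^ i' → i = i' := by
    intro i i' h
    exact Nat.pow_right_injective hℓ (by exact_mod_cast h)
  by_cases hf0 : f = 0
  · left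
    have hm0 : mahlerOp ℓ hℓ n a (0 : HahnSeries ℚ K) = 0 := by
      simp [mahlerOp, HahnSeries.embDomain_zero]
    rw [hf0] at hf
    rw [hf0, ← hf, hm0]
    simp
  set v : ℚ := f.isWF_support.min (HahnSeries.support_nonempty_iff.2 hf0) with hvdef
  have hvtop : f.orderTop = (v : WithTop ℚ) := HahnSeries.orderTop_of_ne_zero hf0
  have hfv : f.coeff v ≠ 0 := HahnSeries.coeff_orderTop_ne hvtop
  have hflt : ∀ w : ℚ, w < v → f.coeff w = 0 := fun w hw =>
    HahnSeries.coeff_eq_zero_of_lt_orderTop (by rw [hvtop]; exact_mod_cast hw)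
  have hPLne : (PL ℓ n a).Nonempty := by
    obtain ⟨j, hj⟩ := Polynomial.support_nonempty.2 h0
    exact ⟨((ℓ : ℚ) ^ 0, (j : ℚ)), mem_PL.2 ⟨0, Nat.zero_le n, j, hj, rfl⟩⟩
  obtain ⟨p0, hp0PL, hp0min⟩ :=
    Finset.exists_min_image (PL ℓ n a) (fun p => v * p.1 + p.2) hPLne
  set m : ℚ := v * p0.1 + p0.2 with hm
  by_cases huniq : ∀ p ∈ PL ℓ n a, v * p.1 + p.2 = m → p = p0
  · -- unique minimizer : left disjunct
    obtain ⟨i0, hi0, j0, hj0, hp0eq⟩ := mem_PL.1 hp0PL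
    have hmv : m = v * (ℓ : ℚ) ^ i0 + (j0 : ℚ) := by rw [hm, ← hp0eq]
    have hAcoeff : ∀ q : ℚ, q < m → (mahlerOp ℓ hℓ n a f).coeff q = 0 := by
      intro q hq
      rw [mahler_coeff]
      refine Finset.sum_eq_zero fun i hi => Finset.sum_eq_zero fun j hj => ?_
      have hple : m ≤ v * (ℓ : ℚ) ^ i + (j : ℚ) :=
        hp0min _ (mem_PL.2 ⟨i, Nat.lt_succ_iff.1 (Finset.mem_range.1 hi), j, hj, rfl⟩)
      have hlt : (q - (j : ℚ)) / (ℓ : ℚ) ^ i < v := by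
        rw [div_lt_iff₀ (hpow i)]
        linarith
      rw [hflt _ hlt, mul_zero]
    have hstrict : ∀ i j, i ≤ n → j ∈ (a i).support → (i ≠ i0 ∨ j ≠ j0) →
        m < v * (ℓ : ℚ) ^ i + (j : ℚ) := by
      intro i j hi hj hne
      have hple : m ≤ v * (ℓ : ℚ) ^ i + (j : ℚ) :=
        hp0min _ (mem_PL.2 ⟨i, hi, j, hj, rfl⟩)
      rcases eq_or_lt_of_le hple with heq | hlt
      · exfalso
        have := huniq _ (mem_PL.2 ⟨i, hi, j, hj, rfl⟩) heq.symm
        rw [← hp0eq] at this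
        have h1 : (ℓ : ℚ) ^ i = (ℓ : ℚ) ^ i0 := congrArg Prod.fst this
        have h2 : (j : ℚ) = (j0 : ℚ) := congrArg Prod.snd this
        have hii : i = i0 := hpowinj _ _ h1
        have hjj : j = j0 := by exact_mod_cast h2
        rcases hne with h | h
        · exact h hii
        · exact h hjj
      · exact hlt
    have hBcoeff : (mahlerOp ℓ hℓ n a f).coeff m = (a i0).coeff j0 * f.coeff v := by
      rw [mahler_coeff]
      rw [Finset.sum_eq_single i0]
      · rw [Finset.sum_eq_single j0]
        · congr 2
          rw [hmv]
          field_simp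
          ring
        · intro j hj hjne
          have hlt : (m - (j : ℚ)) / (ℓ : ℚ) ^ i0 < v := by
            rw [div_lt_iff₀ (hpow i0)]
            have := hstrict i0 j hi0 hj (Or.inr hjne)
            linarith
          rw [hflt _ hlt, mul_zero]
        · intro h
          exact absurd hj0 h
      · intro i hi hine
        refine Finset.sum_eq_zero fun j hj => ?_
        have hlt : (m - (j : ℚ)) / (ℓ : ℚ) ^ i < v := by
          rw [div_lt_iff₀ (hpow i)]
          have := hstrict i j (Nat.lt_succ_iff.1 (Finset.mem_range.1 hi)) hj (Or.inl hine)
          linarith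
        rw [hflt _ hlt, mul_zero]
      · intro h
        exact absurd (Finset.mem_range.2 (Nat.lt_succ_of_le hi0)) h
    have hANe : ainf.coeff m ≠ 0 := by
      rw [← hf, hBcoeff]
      exact mul_ne_zero (Polynomial.mem_support_iff.1 hj0) hfv
    have hAtop : ainf.orderTop = (m : WithTop ℚ) := by
      refine HahnSeries.orderTop_eq_of_le hANe fun g hg => ?_
      by_contra hlt
      push_neg at hlt
      exact hg (by rw [← hf]; exact hAcoeff g hlt)
    have hpiF : piF ℓ n a m = v := by
      have hmax : (((PL ℓ n a).image fun p => (m - p.2) / p.1).max) = (v : WithBot ℚ) := by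
        apply le_antisymm
        · apply Finset.max_le
          intro x hx
          obtain ⟨p, hp, rfl⟩ := Finset.mem_image.1 hx
          obtain ⟨i, hi, j, hj, hpe⟩ := mem_PL.1 hp
          have hple : m ≤ v * p.1 + p.2 := hp0min p hp
          have hp1 : (0 : ℚ) < p.1 := by rw [← hpe]; exact hpow i
          refine (WithBot.coe_le_coe).2 ?_
          rw [div_le_iff₀ hp1]
          linarith
        · refine Finset.le_max (Finset.mem_image.2 ⟨p0, hp0PL, ?_⟩)
          rw [← hp0eq]
          show (m - (j0 : ℚ)) / (ℓ : ℚ) ^ i0 = v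
          rw [hmv]
          field_simp
          ring
      rw [piF, hmax]
      rfl
    left
    rw [hvtop, hAtop]
    rw [show WithTop.map (piF ℓ n a) ((m : WithTop ℚ)) = ((piF ℓ n a m : ℚ) : WithTop ℚ) from
      rfl, hpiF]
  · -- two minimizers : right disjunct
    push_neg at huniq
    obtain ⟨p, hpPL, hpm, hpne⟩ := huniq
    right
    refine ⟨-v, ⟨m, ⟨p, hpPL, p0, hp0PL, hpne, by rw [← hpm]; ring, by rw [hm]; ring⟩,
      fun q hq => ?_⟩, ?_⟩
    · have := hp0min q hq
      linarith
    · rw [hvtop, neg_neg]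
end

section
/- The receptacle V is contained in Z_{d,ℓ} = ∪_{i≥0} (1/(d ℓ^i)) ℤ, where d is a common multiple of the denominators of the slopes of L. Moreover, for any v ∈ Z_{d,ℓ} and any w ∈ π(Ψ(v)), one has w ∈ Z_{d,ℓ} and h(v) ≤ h(w) + n, where h(x) = min { i ≥ 0 : x ∈ (1/(dℓ^i)) ℤ }. -/
open Polynomial Finset

noncomputable def VSeq {K : Type*} [Field K] (ℓ n : ℕ) (a : ℕ → Polynomial K) : ℕ → Set ℚ
  | 0 => Neg.neg '' slopeSet ℓ n a
  | i + 1 => ⋃ v ∈ VSeq ℓ n a i, ((PsiSet ℓ n a v).image (piF ℓ n a) : Set ℚ)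

noncomputable def VSet {K : Type*} [Field K] (ℓ n : ℕ) (a : ℕ → Polynomial K) : Set ℚ :=
  ⋃ i, VSeq ℓ n a i

def Zdl (d ℓ : ℕ) : Set ℚ := {x | ∃ i : ℕ, ∃ m : ℤ, x = (m : ℚ) / (d * ℓ ^ i)}

noncomputable def hfun (d ℓ : ℕ) (x : ℚ) : ℕ :=
  sInf {i : ℕ | ∃ m : ℤ, x = (m : ℚ) / (d * ℓ ^ i)}

lemma mem_PL_elim {K : Type*} [Field K] {ℓ n : ℕ} {a : ℕ → Polynomial K} {p : ℚ × ℚ}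
    (hp : p ∈ PL ℓ n a) : ∃ i ≤ n, ∃ j : ℕ, p = ((ℓ : ℚ) ^ i, (j : ℚ)) := by
  rw [PL, Finset.mem_biUnion] at hp
  obtain ⟨i, hi, hp⟩ := hp
  rw [Finset.mem_image] at hp
  obtain ⟨j, _, rfl⟩ := hp
  exact ⟨i, Nat.lt_succ_iff.mp (Finset.mem_range.mp hi), j, rfl⟩

lemma key_rel {K : Type*} [Field K] {ℓ n : ℕ} (hℓ : 2 ≤ ℓ) {a : ℕ → Polynomial K}
    (h0 : a 0 ≠ 0) {v w : ℚ}
    (hw : w ∈ (PsiSet ℓ n a v).image (piF ℓ n a)) :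
    ∃ i ≤ n, ∃ i' ≤ n, ∃ j j' : ℕ,
      w * (ℓ : ℚ) ^ i' + (j' : ℚ) = v * (ℓ : ℚ) ^ i + (j : ℚ) := by
  have hl0 : (ℓ : ℚ) ≠ 0 := by positivity
  rw [Finset.mem_image] at hw
  obtain ⟨q, hq, rfl⟩ := hw
  rw [PsiSet, Finset.mem_image] at hq
  obtain ⟨p, hp, rfl⟩ := hq
  obtain ⟨i, hi, j, rfl⟩ := mem_PL_elim hp
  set q := v * (ℓ : ℚ) ^ i + (j : ℚ) with hqdef
  obtain ⟨j0, hj0⟩ := Polynomial.support_nonempty.mpr h0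
  have hPLne : (PL ℓ n a).Nonempty :=
    ⟨((ℓ : ℚ) ^ 0, (j0 : ℚ)), Finset.mem_biUnion.mpr
      ⟨0, Finset.mem_range.mpr (Nat.succ_pos n), Finset.mem_image.mpr ⟨j0, hj0, rfl⟩⟩⟩
  set s := (PL ℓ n a).image fun p => (q - p.2) / p.1 with hs
  have hsne : s.Nonempty := hPLne.image _
  have hmax : piF ℓ n a q = s.max' hsne := by
    rw [piF, ← hs, ← Finset.coe_max' hsne, WithBot.unbotD_coe]
  have hmem : s.max' hsne ∈ s := Finset.max'_mem s hsne
  rw [Finset.mem_image] at hmem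
  obtain ⟨p', hp', hval⟩ := hmem
  obtain ⟨i', hi', j', hp'eq⟩ := mem_PL_elim hp'
  refine ⟨i, hi, i', hi', j, j', ?_⟩
  rw [hmax, ← hval, hp'eq]
  have hl' : ((ℓ : ℚ) ^ i') ≠ 0 := pow_ne_zero _ hl0
  field_simp
  linarith [hqdef]

lemma zdl_step {d ℓ n : ℕ} (hd : 1 ≤ d) (hℓ : 2 ≤ ℓ) {v w : ℚ}
    {i i' : ℕ} (hi : i ≤ n) (hi' : i' ≤ n) {j j' : ℕ}
    (hrel : w * (ℓ : ℚ) ^ i' + (j' : ℚ) = v * (ℓ : ℚ) ^ i + (j : ℚ))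
    (hv : v ∈ Zdl d ℓ) : w ∈ Zdl d ℓ ∧ hfun d ℓ v ≤ hfun d ℓ w + n := by
  have hd0 : (0 : ℚ) < (d : ℚ) := by positivity
  have hl0 : (0 : ℚ) < (ℓ : ℚ) := by positivity
  obtain ⟨k, m, hm⟩ := hv
  have hm2 : v * ((d : ℚ) * ℓ ^ k) = (m : ℚ) := by
    rw [hm]; field_simp
  have hwz : w = ((m * ℓ ^ i + ((j : ℤ) - j') * d * ℓ ^ k : ℤ) : ℚ) / (d * ℓ ^ (k + i')) := by
    rw [eq_div_iff (by positivity)]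
    push_cast
    rw [pow_add]
    linear_combination ((d : ℚ) * (ℓ : ℚ) ^ k) * hrel + (ℓ : ℚ) ^ i * hm2
  have hwZ : w ∈ Zdl d ℓ := ⟨k + i', _, hwz⟩
  refine ⟨hwZ, ?_⟩
  have hne : {i : ℕ | ∃ m : ℤ, w = (m : ℚ) / (d * ℓ ^ i)}.Nonempty := ⟨k + i', _, hwz⟩
  have hmem := Nat.sInf_mem hne
  have hfw : hfun d ℓ w = sInf {i : ℕ | ∃ m : ℤ, w = (m : ℚ) / (d * ℓ ^ i)} := rfl
  set kw := sInf {i : ℕ | ∃ m : ℤ, w = (m : ℚ) / (d * ℓ ^ i)} with hkw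
  obtain ⟨m', hm'⟩ := hmem
  have hm2' : w * ((d : ℚ) * ℓ ^ kw) = (m' : ℚ) := by
    rw [hm']; field_simp
  have hvz : v = ((m' * ℓ ^ i' + ((j' : ℤ) - j) * d * ℓ ^ kw : ℤ) : ℚ) /
      (d * ℓ ^ (kw + i)) := by
    rw [eq_div_iff (by positivity)]
    push_cast
    rw [pow_add]
    linear_combination ((d : ℚ) * (ℓ : ℚ) ^ kw) * hrel.symm + (ℓ : ℚ) ^ i' * hm2'
  have hle : hfun d ℓ v ≤ kw + i := Nat.sInf_le ⟨_, hvz⟩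
  rw [hfw]
  omega

theorem stmt13 {K : Type*} [Field K] (ℓ n : ℕ) (hℓ : 2 ≤ ℓ) (a : ℕ → Polynomial K)
    (h0 : a 0 ≠ 0) (hn : a n ≠ 0) (d : ℕ) (hd : 1 ≤ d)
    (hdsl : ∀ μ ∈ slopeSet ℓ n a, ∃ m : ℤ, (d : ℚ) * μ = m) :
    VSet ℓ n a ⊆ Zdl d ℓ ∧
    ∀ v ∈ Zdl d ℓ, ∀ w ∈ (PsiSet ℓ n a v).image (piF ℓ n a),
      w ∈ Zdl d ℓ ∧ hfun d ℓ v ≤ hfun d ℓ w + n := by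
  have hd0 : (d : ℚ) ≠ 0 := by positivity
  have main2 : ∀ v ∈ Zdl d ℓ, ∀ w ∈ (PsiSet ℓ n a v).image (piF ℓ n a),
      w ∈ Zdl d ℓ ∧ hfun d ℓ v ≤ hfun d ℓ w + n := by
    intro v hv w hw
    obtain ⟨i, hi, i', hi', j, j', hrel⟩ := key_rel hℓ h0 hw
    exact zdl_step hd hℓ hi hi' hrel hv
  refine ⟨?_, main2⟩
  intro x hx
  rw [VSet, Set.mem_iUnion] at hx
  obtain ⟨N, hx⟩ := hx
  induction N generalizing x with
  | zero =>
    obtain ⟨μ, hμ, rfl⟩ := hx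
    obtain ⟨m, hm⟩ := hdsl μ hμ
    refine ⟨0, -m, ?_⟩
    push_cast
    rw [pow_zero, mul_one]
    field_simp
    linarith
  | succ N ih =>
    rw [VSeq] at hx
    simp only [Set.mem_iUnion] at hx
    obtain ⟨v, hv, hx⟩ := hx
    exact (main2 v (ih hv) x hx).1
end

section
/- Let w, w' ∈ Z_{d,ℓ}. If w' ∈ Δ(w), then w' < w and w ∈ π(Ψ(w')); conversely, if w ∈ π(Ψ(w')) and w ≠ w', then w' ∈ Δ(w) and w' < w. Here Δ(w) = { (ψ(w) − β)/ℓ^α : (ℓ^α, β) ∈ P(L) } \ {w}. -/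
open Polynomial Finset
set_option maxHeartbeats 1000000

section Aux
variable {K : Type*} [Field K]

lemma PL_pos (ℓ n : ℕ) (hℓ : 2 ≤ ℓ) (a : ℕ → Polynomial K) :
    ∀ p ∈ PL ℓ n a, (0 : ℚ) < p.1 := by
  intro p hp
  simp only [PL, Finset.mem_biUnion, Finset.mem_image] at hp
  obtain ⟨i, -, j, -, rfl⟩ := hp
  exact pow_pos (by exact_mod_cast Nat.lt_of_lt_of_le Nat.zero_lt_two hℓ) i

lemma PL_ne (ℓ n : ℕ) (a : ℕ → Polynomial K) (h0 : a 0 ≠ 0) :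
    (PL ℓ n a).Nonempty := by
  obtain ⟨j, hj⟩ := Polynomial.support_nonempty.mpr h0
  exact ⟨((ℓ : ℚ) ^ 0, (j : ℚ)), Finset.mem_biUnion.mpr ⟨0, Finset.mem_range.mpr (Nat.succ_pos n),
    Finset.mem_image.mpr ⟨j, hj, rfl⟩⟩⟩

lemma psi_eq (ℓ n : ℕ) (a : ℕ → Polynomial K) (v : ℚ) (h : (PsiSet ℓ n a v).Nonempty) :
    psi ℓ n a v = (PsiSet ℓ n a v).min' h := by
  simp [psi, ← Finset.coe_min' h]

lemma piF_eq (ℓ n : ℕ) (a : ℕ → Polynomial K) (q : ℚ)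
    (h : (((PL ℓ n a).image fun p => (q - p.2) / p.1)).Nonempty) :
    piF ℓ n a q = (((PL ℓ n a).image fun p => (q - p.2) / p.1)).max' h := by
  simp [piF, ← Finset.coe_max' h]

end Aux

noncomputable def DeltaSet {K : Type*} [Field K] (ℓ n : ℕ) (a : ℕ → Polynomial K)
    (w : ℚ) : Finset ℚ :=
  ((PL ℓ n a).image fun p => (psi ℓ n a w - p.2) / p.1) \ {w}

theorem stmt15 {K : Type*} [Field K] (ℓ n : ℕ) (hℓ : 2 ≤ ℓ) (a : ℕ → Polynomial K)
    (h0 : a 0 ≠ 0) (hn : a n ≠ 0) (d : ℕ) (hd : 1 ≤ d)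
    (hdsl : ∀ μ ∈ slopeSet ℓ n a, ∃ m : ℤ, (d : ℚ) * μ = m)
    (w w' : ℚ) (hw : w ∈ Zdl d ℓ) (hw' : w' ∈ Zdl d ℓ) :
    (w' ∈ DeltaSet ℓ n a w →
      w' < w ∧ w ∈ (PsiSet ℓ n a w').image (piF ℓ n a)) ∧
    (w ∈ (PsiSet ℓ n a w').image (piF ℓ n a) → w ≠ w' →
      w' ∈ DeltaSet ℓ n a w ∧ w' < w) := by

  have hpos : ∀ p ∈ PL ℓ n a, (0 : ℚ) < p.1 := PL_pos ℓ n hℓ a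
  have hPLne : (PL ℓ n a).Nonempty := PL_ne ℓ n a h0
  have hPsi : ∀ v : ℚ, (PsiSet ℓ n a v).Nonempty := fun v => hPLne.image _
  have hpiNE : ∀ q : ℚ, (((PL ℓ n a).image fun p => (q - p.2) / p.1)).Nonempty :=
    fun q => hPLne.image _
  have hpsi_le : ∀ v : ℚ, ∀ p ∈ PL ℓ n a, psi ℓ n a v ≤ v * p.1 + p.2 := by
    intro v p hp
    rw [psi_eq ℓ n a v (hPsi v)]
    apply Finset.min'_le
    exact Finset.mem_image_of_mem _ hp
  have hpsi_mem : ∀ v : ℚ, ∃ p ∈ PL ℓ n a, psi ℓ n a v = v * p.1 + p.2 := by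
    intro v
    have h1 := Finset.min'_mem _ (hPsi v)
    rw [← psi_eq ℓ n a v (hPsi v)] at h1
    rw [PsiSet, Finset.mem_image] at h1
    obtain ⟨p, hp, hpe⟩ := h1
    exact ⟨p, hp, hpe.symm⟩
  have hpiF_ge : ∀ q : ℚ, ∀ p ∈ PL ℓ n a, (q - p.2) / p.1 ≤ piF ℓ n a q := by
    intro q p hp
    rw [piF_eq ℓ n a q (hpiNE q)]
    apply Finset.le_max'
    exact Finset.mem_image_of_mem _ hp
  have hpiF_mem : ∀ q : ℚ, ∃ p ∈ PL ℓ n a, piF ℓ n a q = (q - p.2) / p.1 := by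
    intro q
    have h1 := Finset.max'_mem _ (hpiNE q)
    rw [← piF_eq ℓ n a q (hpiNE q), Finset.mem_image] at h1
    obtain ⟨p, hp, hpe⟩ := h1
    exact ⟨p, hp, hpe.symm⟩
  constructor
  · intro hΔ
    rw [DeltaSet, Finset.mem_sdiff, Finset.mem_image, Finset.mem_singleton] at hΔ
    obtain ⟨⟨p, hp, hpw⟩, hww⟩ := hΔ
    have hp1 := hpos p hp
    rw [div_eq_iff (ne_of_gt hp1)] at hpw
    have hle : w' ≤ w := by
      have h1 := hpsi_le w p hp
      nlinarith [hpw]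
    refine ⟨lt_of_le_of_ne hle hww, ?_⟩
    rw [Finset.mem_image]
    refine ⟨psi ℓ n a w, ?_, ?_⟩
    · rw [PsiSet, Finset.mem_image]
      exact ⟨p, hp, by linarith [hpw]⟩
    · apply le_antisymm
      · obtain ⟨p', hp', hp'eq⟩ := hpiF_mem (psi ℓ n a w)
        rw [hp'eq, div_le_iff₀ (hpos p' hp')]
        linarith [hpsi_le w p' hp']
      · obtain ⟨ps, hps, hpse⟩ := hpsi_mem w
        have heq : (psi ℓ n a w - ps.2) / ps.1 = w := by
          rw [hpse, add_sub_cancel_right, mul_div_cancel_right₀ _ (ne_of_gt (hpos ps hps))]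
        have h3 := hpiF_ge (psi ℓ n a w) ps hps
        rwa [heq] at h3
  · intro hq hww
    rw [Finset.mem_image] at hq
    obtain ⟨q, hqmem, hpiq⟩ := hq
    rw [PsiSet, Finset.mem_image] at hqmem
    obtain ⟨p, hp, hpq⟩ := hqmem
    have hp1 := hpos p hp
    have hw'eq : (q - p.2) / p.1 = w' := by
      rw [← hpq]
      field_simp
      ring
    have hw'le : w' ≤ w := by
      have h1 := hpiF_ge q p hp
      rw [hpiq, hw'eq] at h1
      exact h1
    have hlt : w' < w := lt_of_le_of_ne hw'le (Ne.symm hww)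
    have hql : q ≤ psi ℓ n a w := by
      obtain ⟨ps, hps, hpse⟩ := hpsi_mem w
      rw [hpse]
      have h1 := hpiF_ge q ps hps
      rw [hpiq, div_le_iff₀ (hpos ps hps)] at h1
      linarith
    have hqg : psi ℓ n a w ≤ q := by
      obtain ⟨p', hp', hp'eq⟩ := hpiF_mem q
      rw [hpiq, eq_div_iff (ne_of_gt (hpos p' hp'))] at hp'eq
      have h2 : q = w * p'.1 + p'.2 := by linarith
      rw [h2]
      exact hpsi_le w p' hp'
    have hq_eq : psi ℓ n a w = q := le_antisymm hqg hql
    refine ⟨?_, hlt⟩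
    rw [DeltaSet, Finset.mem_sdiff, Finset.mem_image, Finset.mem_singleton]
    exact ⟨⟨p, hp, by rw [hq_eq, hw'eq]⟩, Ne.symm hww⟩
end

section
/- If Δ(w) = { (ψ(w) − β)/ℓ^α : (ℓ^α, β) ∈ P(L) } \ {w} is empty for some w ∈ Z_{d,ℓ}, then the Newton polygon of L has a unique slope μ_1 and w = −μ_1. -/
open Polynomial Finset

theorem stmt16 {K : Type*} [Field K] (ℓ n : ℕ) (hℓ : 2 ≤ ℓ) (a : ℕ → Polynomial K)
    (h0 : a 0 ≠ 0) (hn : a n ≠ 0) (hn1 : 1 ≤ n) (d : ℕ) (hd : 1 ≤ d)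
    (hdsl : ∀ μ ∈ slopeSet ℓ n a, ∃ m : ℤ, (d : ℚ) * μ = m)
    (w : ℚ) (hw : w ∈ Zdl d ℓ) (hΔ : DeltaSet ℓ n a w = ∅) :
    ∃ μ : ℚ, slopeSet ℓ n a = {μ} ∧ w = -μ := by
  classical
  have hℓ1 : (1:ℚ) < (ℓ:ℚ) := by exact_mod_cast lt_of_lt_of_le one_lt_two hℓ
  -- every point of PL has positive first coordinate
  have hmem : ∀ p ∈ PL ℓ n a, ∃ i ≤ n, ∃ j ∈ (a i).support,
      p = ((ℓ:ℚ)^i, (j:ℚ)) := by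
    intro p hp
    simp only [PL, Finset.mem_biUnion, Finset.mem_range, Finset.mem_image] at hp
    obtain ⟨i, hi, j, hj, rfl⟩ := hp
    exact ⟨i, by omega, j, hj, rfl⟩
  have hpos : ∀ p ∈ PL ℓ n a, 0 < p.1 := by
    intro p hp
    obtain ⟨i, _, j, _, rfl⟩ := hmem p hp
    exact pow_pos (by linarith) i
  -- key: all points satisfy w * p.1 + p.2 = psi
  have hall : ∀ p ∈ PL ℓ n a, w * p.1 + p.2 = psi ℓ n a w := by
    intro p hp
    have hsub : ((PL ℓ n a).image fun p => (psi ℓ n a w - p.2) / p.1) ⊆ {w} :=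
      Finset.sdiff_eq_empty_iff_subset.mp hΔ
    have := hsub (Finset.mem_image_of_mem _ hp)
    rw [Finset.mem_singleton] at this
    have hp1 := hpos p hp
    field_simp at this
    linarith
  -- two distinct points
  obtain ⟨j0, hj0⟩ := Polynomial.nonempty_support_iff.mpr h0
  obtain ⟨jn, hjn⟩ := Polynomial.nonempty_support_iff.mpr hn
  have hp0 : ((ℓ:ℚ)^0, (j0:ℚ)) ∈ PL ℓ n a := by
    simp only [PL, Finset.mem_biUnion, Finset.mem_range, Finset.mem_image]
    exact ⟨0, by omega, j0, hj0, rfl⟩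
  have hpn : ((ℓ:ℚ)^n, (jn:ℚ)) ∈ PL ℓ n a := by
    simp only [PL, Finset.mem_biUnion, Finset.mem_range, Finset.mem_image]
    exact ⟨n, by omega, jn, hjn, rfl⟩
  have hne : ((ℓ:ℚ)^0, (j0:ℚ)) ≠ ((ℓ:ℚ)^n, (jn:ℚ)) := by
    intro h
    have h1 : (ℓ:ℚ)^0 = (ℓ:ℚ)^n := congrArg Prod.fst h
    have : (1:ℚ) < (ℓ:ℚ)^n := one_lt_pow₀ hℓ1 (by omega)
    rw [pow_zero] at h1; linarith
  have hmemslope : -w ∈ slopeSet ℓ n a := by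
    refine ⟨psi ℓ n a w, ⟨_, hp0, _, hpn, hne, ?_, ?_⟩, ?_⟩
    · have h := hall _ hp0; dsimp only at h; simp only [neg_mul]; linarith
    · have h := hall _ hpn; dsimp only at h; simp only [neg_mul]; linarith
    · intro p hp; have := hall p hp; simp only [neg_mul]; linarith
  refine ⟨-w, ?_, by ring⟩
  ext μ
  simp only [Set.mem_singleton_iff]
  constructor
  · rintro ⟨b, ⟨p, hp, q, hq, hpq, hb1, hb2⟩, _⟩
    have e1 := hall p hp
    have e2 := hall q hq
    by_cases h : p.1 = q.1
    · exfalso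
      apply hpq
      have : p.2 = q.2 := by rw [h] at e1; linarith
      exact Prod.ext h this
    · have h3 : p.2 - q.2 = μ * (p.1 - q.1) := by linarith [hb1, hb2, mul_sub μ p.1 q.1]
      have h4 : p.2 - q.2 = -w * (p.1 - q.1) := by
        have := mul_sub (-w) p.1 q.1; linarith
      have h5 : (μ + w) * (p.1 - q.1) = 0 := by ring_nf; ring_nf at h3 h4; linarith
      have h6 : p.1 - q.1 ≠ 0 := sub_ne_zero.mpr h
      have := (mul_eq_zero.mp h5).resolve_right h6
      linarith
  · rintro rfl; exact hmemslope
end
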